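/- If K is a normal subgroup of a finitely generated free group F, then K is finitely generated if and only if K is trivial or K has finite index in F. -/

import Mathlib

open FreeGroup List

namespace Stmt13Aux

variable {α : Type*} [DecidableEq α]
set_option linter.unusedSectionVars false

/-- Non-cancellation relation between adjacent letters, matching `FreeGroup.reduce`. -/
def RedP (a b : α × Bool) : Prop := ¬(a.1 = b.1 ∧ a.2 = !b.2)

theorem reduce_eq_self_iff (W : List (α × Bool)) :
    FreeGroup.reduce W = W ↔ W.Chain' RedP := by
  induction W with
  | nil => simp; exact List.IsChain.nil
  | cons x L ih =>
    rw [FreeGroup.reduce.cons]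
    rcases hr : FreeGroup.reduce L with _ | ⟨hd, tl⟩
    · constructor
      · intro h
        have hL : L = [] := by
          have := congrArg List.length h
          simp at this
          simp [this.symm]
        subst hL; exact List.IsChain.singleton _
      · intro h
        have hL : FreeGroup.reduce L = L := ih.mpr h.tail
        rw [hr] at hL
        subst hL; rfl
    · show (if x.1 = hd.1 ∧ x.2 = !hd.2 then tl else x :: hd :: tl) = x :: L ↔ _
      by_cases hc : x.1 = hd.1 ∧ x.2 = !hd.2
      · rw [if_pos hc]
        constructor
        · intro h
          exfalso
          have h1 : (FreeGroup.reduce L).length ≤ L.length := FreeGroup.Red.length_le FreeGroup.reduce.red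
          rw [hr] at h1
          have := congrArg List.length h
          simp at this h1
          omega
        · intro h
          exfalso
          have hL : FreeGroup.reduce L = L := ih.mpr h.tail
          rw [hr] at hL
          have : RedP x hd := by
            rw [← hL] at h
            exact (List.isChain_cons_cons.mp h).1
          exact this hc
      · rw [if_neg hc]
        constructor
        · intro h
          have hL : L = hd :: tl := by
            injection h with h1 h2
            exact h2.symm
          rw [hL, List.Chain', List.isChain_cons_cons]
          refine ⟨hc, ?_⟩
          rw [← hL]
          exact ih.mp (by rw [hr, hL])
        · intro h
          have hL : FreeGroup.reduce L = L := ih.mpr h.tail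
          rw [hr] at hL
          rw [hL]


/-- Every prefix of `W` lies in a coset of `K` containing an element of norm `≤ L`. -/
def P (K : Subgroup (FreeGroup α)) (L : ℕ) (W : List (α × Bool)) : Prop :=
  ∀ p q : List (α × Bool), W = p ++ q →
    ∃ k ∈ K, (k * FreeGroup.mk p).toWord.length ≤ L

theorem P_short {K : Subgroup (FreeGroup α)} {L : ℕ} {W : List (α × Bool)}
    (h : W.length ≤ L) : P K L W := by
  intro p q hpq
  refine ⟨1, K.one_mem, ?_⟩
  rw [one_mul]
  calc (FreeGroup.mk p).toWord.length ≤ p.length := FreeGroup.norm_mk_le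
    _ ≤ W.length := by rw [hpq, List.length_append]; omega
    _ ≤ L := h

theorem mk_eq_of_step {W W' : List (α × Bool)} (h : FreeGroup.Red.Step W W') :
    FreeGroup.mk W = FreeGroup.mk W' := by
  rw [← FreeGroup.quot_mk_eq_mk, ← FreeGroup.quot_mk_eq_mk]
  exact Quot.sound h

theorem P_step {K : Subgroup (FreeGroup α)} {L : ℕ} {W W' : List (α × Bool)}
    (h : FreeGroup.Red.Step W W') (hP : P K L W) : P K L W' := by
  cases h with
  | @not L₁ L₂ x b =>
    intro p q hpq
    rcases List.append_eq_append_iff.mp hpq.symm with ⟨a, ha₁, ha₂⟩ | ⟨c, hc₁, hc₂⟩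
    · -- L₁ = p ++ a, q = a ++ L₂
      exact hP p (a ++ (x, b) :: (x, !b) :: L₂) (by rw [ha₁]; simp)
    · -- p = L₁ ++ c, L₂ = c ++ q
      obtain ⟨k, hk, hl⟩ := hP (L₁ ++ (x, b) :: (x, !b) :: c) q (by rw [hc₂]; simp)
      refine ⟨k, hk, ?_⟩
      have hstep : FreeGroup.Red.Step (L₁ ++ (x, b) :: (x, !b) :: c) (L₁ ++ c) :=
        FreeGroup.Red.Step.not
      have := mk_eq_of_step hstep
      rw [hc₁, ← this]
      exact hl

theorem P_red {K : Subgroup (FreeGroup α)} {L : ℕ} {W W' : List (α × Bool)}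
    (h : FreeGroup.Red W W') (hP : P K L W) : P K L W' := by
  induction h with
  | refl => exact hP
  | tail _ h₂ ih => exact P_step h₂ ih

theorem P_append {K : Subgroup (FreeGroup α)} {L : ℕ} {A B : List (α × Bool)}
    (hA : FreeGroup.mk A ∈ K) (hPA : P K L A) (hPB : P K L B) : P K L (A ++ B) := by
  intro p q hpq
  rcases List.append_eq_append_iff.mp hpq.symm with ⟨a, ha₁, ha₂⟩ | ⟨c, hc₁, hc₂⟩
  · exact hPA p a ha₁
  · obtain ⟨k, hk, hl⟩ := hPB c q hc₂
    refine ⟨k * (FreeGroup.mk A)⁻¹, K.mul_mem hk (K.inv_mem hA), ?_⟩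
    have : k * (FreeGroup.mk A)⁻¹ * FreeGroup.mk p = k * FreeGroup.mk c := by
      rw [hc₁, ← FreeGroup.mul_mk]
      group
    rw [this]
    exact hl

theorem invRev_append (A B : List (α × Bool)) :
    FreeGroup.invRev (A ++ B) = FreeGroup.invRev B ++ FreeGroup.invRev A := by
  simp [FreeGroup.invRev]

theorem P_invRev {K : Subgroup (FreeGroup α)} {L : ℕ} {W : List (α × Bool)}
    (hW : FreeGroup.mk W ∈ K) (hP : P K L W) : P K L (FreeGroup.invRev W) := by
  intro p q hpq
  have hW' : W = FreeGroup.invRev q ++ FreeGroup.invRev p := by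
    have := congrArg FreeGroup.invRev hpq
    rw [FreeGroup.invRev_invRev, invRev_append] at this
    exact this
  obtain ⟨k, hk, hl⟩ := hP (FreeGroup.invRev q) (FreeGroup.invRev p) hW'
  refine ⟨k * FreeGroup.mk W, K.mul_mem hk hW, ?_⟩
  have h2 : FreeGroup.mk W = FreeGroup.mk (FreeGroup.invRev q) * (FreeGroup.mk p)⁻¹ := by
    rw [FreeGroup.inv_mk, FreeGroup.mul_mk, ← hW']
  have h3 : k * FreeGroup.mk W * FreeGroup.mk p = k * FreeGroup.mk (FreeGroup.invRev q) := by
    rw [h2]; group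
  rw [h3]
  exact hl

theorem P_toWord {K : Subgroup (FreeGroup α)} {L : ℕ} (S : Finset (FreeGroup α))
    (hS : Subgroup.closure (S : Set (FreeGroup α)) = K)
    (hL : ∀ s ∈ S, s.toWord.length ≤ L) {w : FreeGroup α} (hw : w ∈ K) :
    P K L w.toWord := by
  rw [← hS] at hw
  induction hw using Subgroup.closure_induction with
  | mem s hs => exact P_short (hL s hs)
  | one => rw [FreeGroup.toWord_one]; exact P_short (by simp)
  | mul a b ha hb pa pb =>
    have haK : a ∈ K := hS ▸ ha
    have h1 : P K L (a.toWord ++ b.toWord) :=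
      P_append (by rw [FreeGroup.mk_toWord]; exact haK) pa pb
    have h2 : (a * b).toWord = FreeGroup.reduce (a.toWord ++ b.toWord) := by
      conv_lhs => rw [← FreeGroup.mk_toWord (x := a), ← FreeGroup.mk_toWord (x := b),
        FreeGroup.mul_mk, FreeGroup.toWord_mk]
    rw [h2]
    exact P_red FreeGroup.reduce.red h1
  | inv a ha pa =>
    rw [FreeGroup.toWord_inv]
    exact P_invRev (by rw [FreeGroup.mk_toWord]; exact hS ▸ ha) pa


theorem main_ge2 {n : ℕ} (hn : 2 ≤ n) (K : Subgroup (FreeGroup (Fin n))) (hK : K.Normal)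
    (hfg : K.FG) (hne : K ≠ ⊥) : K.FiniteIndex := by
  by_contra hinf
  obtain ⟨S, hS⟩ := hfg
  set L := S.sup (fun s => s.toWord.length) with hLdef
  have hL : ∀ s ∈ S, s.toWord.length ≤ L :=
    fun s hs => Finset.le_sup (f := fun s => s.toWord.length) hs
  -- the quotient is infinite
  have hidx : K.index = 0 := by
    by_contra h; exact hinf ⟨h⟩
  have hquot : Infinite (FreeGroup (Fin n) ⧸ K) :=
    Subgroup.index_eq_zero_iff_infinite.mp hidx
  -- find a coset containing no element of length ≤ L
  have hfin : {w : FreeGroup (Fin n) | w.toWord.length ≤ L}.Finite := by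
    have hsub : {w : FreeGroup (Fin n) | w.toWord.length ≤ L} ⊆
        FreeGroup.mk '' {l : List (Fin n × Bool) | l.length ≤ L} :=
      fun w hw => ⟨w.toWord, hw, FreeGroup.mk_toWord⟩
    exact ((List.finite_length_le (Fin n × Bool) L).image _).subset hsub
  obtain ⟨c, -, hc⟩ := (Set.infinite_univ (α := FreeGroup (Fin n) ⧸ K)).exists_notMem_finite
    (hfin.image (QuotientGroup.mk : FreeGroup (Fin n) → FreeGroup (Fin n) ⧸ K))
  obtain ⟨g, rfl⟩ := QuotientGroup.mk_surjective c
  have hg : ∀ k ∈ K, L < (k * g).toWord.length := by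
    intro k hk
    by_contra h
    push_neg at h
    refine hc ⟨k * g, h, ?_⟩
    rw [QuotientGroup.eq]
    have : g⁻¹ * k⁻¹ * (g⁻¹)⁻¹ ∈ K := hK.conj_mem k⁻¹ (K.inv_mem hk) g⁻¹
    simpa [mul_assoc] using this
  set G := g.toWord with hGdef
  have hmkG : FreeGroup.mk G = g := FreeGroup.mk_toWord
  have hGne : G ≠ [] := by
    intro h
    have := hg 1 K.one_mem
    rw [one_mul, ← hGdef, h] at this
    simp at this
  have chainG : G.Chain' RedP := (reduce_eq_self_iff G).mp (FreeGroup.reduce_toWord g)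
  -- a nontrivial element of K
  obtain ⟨⟨u, hu⟩, hune⟩ := Subgroup.ne_bot_iff_exists_ne_one.mp hne
  have hune' : u ≠ 1 := by simpa using hune
  set U := u.toWord with hUdef
  have hUne : U ≠ [] := fun h => hune' (FreeGroup.toWord_eq_nil_iff.mp h)
  have chainU : U.Chain' RedP := (reduce_eq_self_iff U).mp (FreeGroup.reduce_toWord u)
  set x := U.head hUne with hxdef
  set y := U.getLast hUne with hydef
  set t := G.getLast hGne with htdef
  -- choose a letter s avoiding three letters
  have hex : ∃ s : Fin n × Bool, s ≠ (x.1, !x.2) ∧ s ≠ y ∧ s ≠ (t.1, !t.2) := by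
    by_contra h
    push_neg at h
    have hsub : (Finset.univ : Finset (Fin n × Bool)) ⊆ {(x.1, !x.2), y, (t.1, !t.2)} := by
      intro s _
      simp only [Finset.mem_insert, Finset.mem_singleton]
      by_contra hs
      push_neg at hs
      obtain ⟨a1, a2, a3⟩ := hs
      exact a3 (h s a1 a2)
    have hcard := Finset.card_le_card hsub
    have hcard2 : Fintype.card (Fin n × Bool) = 2 * n := by
      simp [Fintype.card_prod, mul_comm]
    rw [Finset.card_univ, hcard2] at hcard
    have h3 : ({(x.1, !x.2), y, (t.1, !t.2)} : Finset (Fin n × Bool)).card ≤ 3 := by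
      apply le_trans (Finset.card_insert_le _ _)
      have h4 := Finset.card_insert_le y ({(t.1, !t.2)} : Finset (Fin n × Bool))
      simp at h4 ⊢
      omega
    omega
  obtain ⟨s, hs1, hs2, hs3⟩ := hex
  set e : Fin n × Bool := (s.1, !s.2) with hedef
  set et : Fin n × Bool := (t.1, !t.2) with hetdef
  set V : List (Fin n × Bool) := (s :: U) ++ [e] with hVdef
  -- relations between the various letters
  have hRsx : RedP s x := by
    rintro ⟨h1, h2⟩
    exact hs1 (Prod.ext h1 h2)
  have hRye : RedP y e := by
    rintro ⟨h1, h2⟩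
    simp only [hedef, Bool.not_not] at h1 h2
    exact hs2 (Prod.ext h1.symm h2.symm)
  have hRts : RedP t s := by
    rintro ⟨h1, h2⟩
    exact hs3 (Prod.ext h1.symm (by simp [h2, hetdef]))
  have hReet : RedP e et := by
    rintro ⟨h1, h2⟩
    simp only [hedef, hetdef, Bool.not_not] at h1 h2
    exact hs3 (Prod.ext h1 (by simp [← h2, hetdef]))
  have hU' : U.dropLast ++ [y] = U := List.dropLast_append_getLast hUne
  have hG' : G.dropLast ++ [t] = G := List.dropLast_append_getLast hGne
  have hheadU : U.head? = some x := List.head?_eq_head hUne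
  have hlastsU : (s :: U).getLast? = some y := by
    conv_lhs => rw [← hU']
    rw [← List.cons_append, List.getLast?_concat]
  -- V is reduced
  have chainV : V.Chain' RedP := by
    rw [hVdef, List.Chain', List.isChain_append]
    refine ⟨?_, by simp, ?_⟩
    · rw [List.isChain_cons]
      refine ⟨?_, chainU⟩
      intro b hb
      rw [hheadU] at hb
      simp only [Option.mem_def, Option.some.injEq] at hb
      rwa [← hb]
    · intro a ha b hb
      rw [hlastsU] at ha
      simp only [Option.mem_def, Option.some.injEq, List.head?_cons] at ha hb
      rw [← ha, ← hb]
      exact hRye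
  have hVred : FreeGroup.reduce V = V := (reduce_eq_self_iff V).mpr chainV
  have hlastV : V.getLast? = some e := by rw [hVdef, List.getLast?_concat]
  have hheadV : V.head? = some s := by rw [hVdef]; rfl
  -- V is a conjugate of u, hence in K
  have hVK : FreeGroup.mk V ∈ K := by
    have h1 : FreeGroup.mk V = FreeGroup.mk [s] * u * (FreeGroup.mk [s])⁻¹ := by
      rw [FreeGroup.inv_mk]
      have hinvs : FreeGroup.invRev [s] = [e] := by simp [FreeGroup.invRev, hedef]
      rw [hinvs]
      conv_rhs => rw [show u = FreeGroup.mk U from FreeGroup.mk_toWord.symm]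
      rw [FreeGroup.mul_mk, FreeGroup.mul_mk, hVdef]
      simp
    rw [h1]
    exact hK.conj_mem u hu (FreeGroup.mk [s])
  set v := FreeGroup.mk V with hvdef
  have hvword : v.toWord = V := by rw [hvdef, FreeGroup.toWord_mk, hVred]
  -- the inverse word of G
  have hinvG : FreeGroup.invRev G = et :: FreeGroup.invRev G.dropLast := by
    conv_lhs => rw [← hG']
    rw [invRev_append]
    simp [FreeGroup.invRev, hetdef]
  have chainInvG : (FreeGroup.invRev G).Chain' RedP := by
    refine (reduce_eq_self_iff _).mp ?_
    rw [FreeGroup.reduce_invRev, hGdef, FreeGroup.reduce_toWord]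
  -- the word of the conjugate g * v * g⁻¹
  have hword : (g * v * g⁻¹).toWord = G ++ (V ++ FreeGroup.invRev G) := by
    have h2 : g * v * g⁻¹ = FreeGroup.mk (G ++ (V ++ FreeGroup.invRev G)) := by
      conv_lhs => rw [← hmkG]
      rw [FreeGroup.inv_mk, hvdef, FreeGroup.mul_mk, FreeGroup.mul_mk, List.append_assoc]
    rw [h2, FreeGroup.toWord_mk]
    refine (reduce_eq_self_iff _).mpr ?_
    rw [List.Chain', List.isChain_append]
    refine ⟨chainG, ?_, ?_⟩
    · rw [List.isChain_append]
      refine ⟨chainV, chainInvG, ?_⟩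
      intro a ha b hb
      rw [hlastV] at ha
      rw [hinvG] at hb
      simp only [Option.mem_def, Option.some.injEq, List.head?_cons] at ha hb
      rw [← ha, ← hb]
      exact hReet
    · intro a ha b hb
      rw [List.getLast?_eq_getLast hGne] at ha
      rw [List.head?_append_of_ne_nil _ (by rw [hVdef]; simp), hheadV] at hb
      simp only [Option.mem_def, Option.some.injEq] at ha hb
      rw [← ha, ← hb, ← htdef]
      exact hRts
  -- contradiction with the core lemma
  have hwK : g * v * g⁻¹ ∈ K := hK.conj_mem v hVK g
  have hP := P_toWord S hS hL hwK
  obtain ⟨k, hk, hl⟩ := hP G (V ++ FreeGroup.invRev G) hword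
  rw [hmkG] at hl
  exact absurd hl (not_le.mpr (hg k hk))


theorem fin0_eq_bot (K : Subgroup (FreeGroup (Fin 0))) : K = ⊥ := by
  have hall : ∀ w : FreeGroup (Fin 0), w = 1 := by
    intro w
    rw [← FreeGroup.mk_toWord (x := w)]
    cases h : w.toWord with
    | nil => rfl
    | cons a l => exact a.1.elim0
  exact (Subgroup.eq_bot_iff_forall K).mpr fun x _ => hall x

/-- The free group on one generator is `ℤ`. -/
noncomputable def intEquiv : FreeGroup (Fin 1) ≃* Multiplicative ℤ :=
  MonoidHom.toMulEquiv
    (FreeGroup.lift fun _ => Multiplicative.ofAdd (1 : ℤ))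
    (zpowersHom (FreeGroup (Fin 1)) (FreeGroup.of 0))
    (by
      apply FreeGroup.ext_hom
      intro a
      have ha : a = 0 := Subsingleton.elim a 0
      simp [ha])
    (by
      apply MonoidHom.ext_mint
      simp)

theorem multInt_zpowers (H : Subgroup (Multiplicative ℤ)) :
    ∃ a : ℤ, H = Subgroup.zpowers (Multiplicative.ofAdd a) ∧ H.index = a.natAbs := by
  obtain ⟨a, ha⟩ := Int.subgroup_cyclic (Subgroup.toAddSubgroup' H)
  refine ⟨a, ?_, ?_⟩
  · ext z
    have hmem : z ∈ H ↔ z.toAdd ∈ Subgroup.toAddSubgroup' H := Iff.rfl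
    rw [hmem, ha, AddSubgroup.mem_closure_singleton, Subgroup.mem_zpowers_iff]
    constructor
    · rintro ⟨k, hk⟩
      exact ⟨k, by rw [← ofAdd_zsmul, hk]; rfl⟩
    · rintro ⟨k, hk⟩
      exact ⟨k, by rw [← hk, toAdd_zpow]; rfl⟩
  · have h1 : H.index = (Subgroup.toAddSubgroup' H).index := rfl
    rw [h1, ha, ← AddSubgroup.zmultiples_eq_closure, Int.index_zmultiples]

theorem case_one (K : Subgroup (FreeGroup (Fin 1))) :
    K.FG ∧ (K ≠ ⊥ → K.FiniteIndex) := by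
  set e := intEquiv
  set H := K.map e.toMonoidHom with hHdef
  obtain ⟨a, hH, hidx⟩ := multInt_zpowers H
  have hKH : K = H.map e.symm.toMonoidHom := by
    rw [hHdef, Subgroup.map_map]
    have : (e.symm.toMonoidHom.comp e.toMonoidHom) = MonoidHom.id _ := by
      ext z; simp
    rw [this, Subgroup.map_id]
  constructor
  · have : K = Subgroup.zpowers (e.symm (Multiplicative.ofAdd a)) := by
      rw [hKH, hH, MonoidHom.map_zpowers]; rfl
    rw [this, Subgroup.zpowers_eq_closure]
    exact ⟨{e.symm (Multiplicative.ofAdd a)}, by simp⟩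
  · intro hne
    have hidxK : K.index = H.index := by
      rw [hHdef]
      refine (Subgroup.index_map_eq K e.surjective ?_).symm
      show (e.toMonoidHom).ker ≤ K
      intro z hz
      have h1 : e z = 1 := hz
      have hz1 : z = 1 := by
        apply e.injective
        simpa using h1
      rw [hz1]
      exact K.one_mem
    have hane : a ≠ 0 := by
      intro h0
      apply hne
      rw [hKH, hH, h0]
      simp
    exact ⟨by rw [hidxK, hidx]; simpa using hane⟩

end Stmt13Aux

/-- A normal subgroup `K` of a finitely generated free group is finitely
generated iff it is trivial or of finite index. -/
theorem stmt13 (n : ℕ) (K : Subgroup (FreeGroup (Fin n))) (hK : K.Normal) :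
    K.FG ↔ K = ⊥ ∨ K.FiniteIndex := by
  constructor
  · intro hfg
    rcases Nat.lt_or_ge n 2 with h | h
    · interval_cases n
      · exact Or.inl (Stmt13Aux.fin0_eq_bot K)
      · rcases eq_or_ne K ⊥ with hb | hb
        · exact Or.inl hb
        · exact Or.inr ((Stmt13Aux.case_one K).2 hb)
    · rcases eq_or_ne K ⊥ with hb | hb
      · exact Or.inl hb
      · exact Or.inr (Stmt13Aux.main_ge2 h K hK hfg hb)
  · rintro (rfl | hfi)
    · exact ⟨∅, by simp⟩
    · haveI : Group.FG (FreeGroup (Fin n)) :=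
        Group.fg_iff.mpr ⟨Set.range FreeGroup.of, FreeGroup.closure_range_of _,
          Set.finite_range _⟩
      haveI := hfi
      exact (Group.fg_iff_subgroup_fg K).mp (Subgroup.fg_of_index_ne_zero K)
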